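/- Consider the discrete-time car model with states (windSpeed, position, velocity, sensor), initial state (0,0,0,0), valid observations (windShift, sensorError) satisfying |windShift| ≤ 1 and |sensorError| ≤ 1/4, the update rule windSpeed' = windSpeed + windShift, position' = position + velocity + windSpeed', sensor' = position' + sensorError, velocity' = velocity + ctrl (sensor', sensor), and a controller ctrl : ℝ × ℝ → ℝ satisfying |ctrl (x₀, x₁) + 2*x₀ - x₁| < 5/4 whenever |x₀| ≤ 13/4 and |x₁| ≤ 13/4. Then for every finite list of valid observations, the final state obtained by folding the update rule over the list from the initial state satisfies |position| ≤ 3. -/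

import Mathlib

structure CarState where
  windSpeed : ℝ
  position : ℝ
  velocity : ℝ
  sensor : ℝ

structure CarObs where
  windShift : ℝ
  sensorError : ℝ

noncomputable def nextState (ctrl : ℝ × ℝ → ℝ) (o : CarObs) (s : CarState) : CarState :=
  let windSpeed' := s.windSpeed + o.windShift
  let position' := s.position + s.velocity + windSpeed'
  let sensor' := position' + o.sensorError
  let velocity' := s.velocity + ctrl (sensor', s.sensor)
  ⟨windSpeed', position', velocity', sensor'⟩

def Invariant (s : CarState) : Prop :=
  |s.position| ≤ 3 ∧ |s.position + s.velocity + s.windSpeed| ≤ 2 ∧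
    |s.sensor - s.position| ≤ 1/4

lemma invariant_step (ctrl : ℝ × ℝ → ℝ)
    (hctrl : ∀ x₀ x₁ : ℝ, |x₀| ≤ 13/4 → |x₁| ≤ 13/4 →
      |ctrl (x₀, x₁) + 2 * x₀ - x₁| < 5/4)
    (o : CarObs) (s : CarState)
    (hw : |o.windShift| ≤ 1) (he : |o.sensorError| ≤ 1/4)
    (hs : Invariant s) : Invariant (nextState ctrl o s) := by
  obtain ⟨h1, h2, h3⟩ := hs
  set p := s.position; set v := s.velocity; set w := s.windSpeed
  set sh := o.windShift; set er := o.sensorError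
  have hp' : |p + v + (w + sh)| ≤ 3 := by
    have := abs_add_le (p + v + w) sh
    calc |p + v + (w + sh)| = |(p + v + w) + sh| := by ring_nf
      _ ≤ |p + v + w| + |sh| := abs_add_le _ _
      _ ≤ 2 + 1 := by linarith
      _ = 3 := by norm_num
  have hs' : |p + v + (w + sh) + er| ≤ 13/4 := by
    calc |p + v + (w + sh) + er| ≤ |p + v + (w + sh)| + |er| := abs_add_le _ _
      _ ≤ 13/4 := by linarith
  have hsold : |s.sensor| ≤ 13/4 := by
    calc |s.sensor| = |(s.sensor - p) + p| := by ring_nf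
      _ ≤ |s.sensor - p| + |p| := abs_add_le _ _
      _ ≤ 13/4 := by linarith
  have hc := hctrl _ _ hs' hsold
  refine ⟨?_, ?_, ?_⟩
  · simpa [nextState] using hp'
  · show |(p + v + (w + sh)) + (v + ctrl (p + v + (w + sh) + er, s.sensor)) + (w + sh)| ≤ 2
    have key : (p + v + (w + sh)) + (v + ctrl (p + v + (w + sh) + er, s.sensor)) + (w + sh) =
        (ctrl (p + v + (w + sh) + er, s.sensor) + 2 * (p + v + (w + sh) + er) - s.sensor)
        - 2 * er + (s.sensor - p) := by ring
    rw [key]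
    have h2er : |(2:ℝ) * er| ≤ 1/2 := by
      rw [abs_mul]; simp only [abs_two]; linarith
    calc |(ctrl (p + v + (w + sh) + er, s.sensor) + 2 * (p + v + (w + sh) + er) - s.sensor) - 2 * er + (s.sensor - p)|
        ≤ |(ctrl (p + v + (w + sh) + er, s.sensor) + 2 * (p + v + (w + sh) + er) - s.sensor) - 2 * er| + |s.sensor - p| := abs_add_le _ _
      _ ≤ |ctrl (p + v + (w + sh) + er, s.sensor) + 2 * (p + v + (w + sh) + er) - s.sensor| + |2 * er| + |s.sensor - p| := by
          have := abs_sub (ctrl (p + v + (w + sh) + er, s.sensor) + 2 * (p + v + (w + sh) + er) - s.sensor) (2 * er : ℝ)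
          linarith
      _ ≤ 2 := by linarith
  · show |(p + v + (w + sh) + er) - (p + v + (w + sh))| ≤ 1/4
    simpa using he

theorem system_safety (ctrl : ℝ × ℝ → ℝ)
    (hctrl : ∀ x₀ x₁ : ℝ, |x₀| ≤ 13/4 → |x₁| ≤ 13/4 →
      |ctrl (x₀, x₁) + 2 * x₀ - x₁| < 5/4)
    (xs : List CarObs)
    (hvalid : ∀ o ∈ xs, |o.windShift| ≤ 1 ∧ |o.sensorError| ≤ 1/4) :
    |(xs.foldr (nextState ctrl) ⟨0, 0, 0, 0⟩).position| ≤ 3 := by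
  suffices h : ∀ xs : List CarObs,
      (∀ o ∈ xs, |o.windShift| ≤ 1 ∧ |o.sensorError| ≤ 1/4) →
      Invariant (xs.foldr (nextState ctrl) ⟨0, 0, 0, 0⟩) from
    (h xs hvalid).1
  intro xs
  induction xs with
  | nil =>
    intro _
    refine ⟨?_, ?_, ?_⟩ <;> simp
  | cons o t ih =>
    intro hv
    have ht := ih fun x hx => hv x (List.mem_cons_of_mem _ hx)
    have ho := hv o (List.mem_cons_self)
    simpa using invariant_step ctrl hctrl o _ ho.1 ho.2 ht
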